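/- In the field ℚ(q), for all nonnegative integers n, i, k: [n,i]·[n,k] = Σ_{j=0}^{i+k} q^{(j-i)(j-k)}·Mq(j;i,k)·[n,j]. -/

import Mathlib

/-- The $q$-factorial `(q)_n = (1-q)(1-q²)⋯(1-qⁿ)` in `ℚ(q) = RatFunc ℚ`. -/
noncomputable def qfac (n : ℕ) : RatFunc ℚ :=
  ∏ m ∈ Finset.range n, (1 - (RatFunc.X : RatFunc ℚ) ^ (m + 1))

/-- The Gaussian binomial coefficient `[n, k]` in `ℚ(q)`. -/
noncomputable def qbinom (n k : ℕ) : RatFunc ℚ :=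
  if k ≤ n then qfac n / (qfac k * qfac (n - k)) else 0

/-- The $q$-multinomial coefficient `Mq(j; i, k)` in `ℚ(q)`: it equals
`(q)_j/((q)_{j-i}(q)_{j-k}(q)_{i+k-j})` when `max i k ≤ j ≤ i + k`, and `0`
otherwise. -/
noncomputable def qmulti (j i k : ℕ) : RatFunc ℚ :=
  if i ≤ j ∧ k ≤ j ∧ j ≤ i + k then
    qfac j / (qfac (j - i) * qfac (j - k) * qfac (i + k - j))
  else 0

lemma one_sub_Xpow_ne_zero (m : ℕ) : (1 : RatFunc ℚ) - RatFunc.X ^ (m+1) ≠ 0 := by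
  intro h
  have h1 : (RatFunc.X : RatFunc ℚ) ^ (m+1) = 1 := (sub_eq_zero.mp h).symm
  have h2 : algebraMap (Polynomial ℚ) (RatFunc ℚ) (Polynomial.X ^ (m+1)) =
      algebraMap (Polynomial ℚ) (RatFunc ℚ) 1 := by
    simp only [map_pow, map_one, RatFunc.algebraMap_X, h1]
  have h3 : (Polynomial.X : Polynomial ℚ) ^ (m+1) = 1 := RatFunc.algebraMap_injective ℚ h2
  have := congrArg Polynomial.natDegree h3
  simp [Polynomial.natDegree_X_pow] at this

lemma qfac_ne_zero (n : ℕ) : qfac n ≠ 0 := by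
  unfold qfac
  exact Finset.prod_ne_zero_iff.2 fun m _ => one_sub_Xpow_ne_zero m

lemma qfac_succ (n : ℕ) : qfac (n+1) = qfac n * (1 - (RatFunc.X : RatFunc ℚ) ^ (n+1)) := by
  unfold qfac; rw [Finset.prod_range_succ]

lemma qbinom_zero (n : ℕ) : qbinom n 0 = 1 := by
  simp [qbinom, qfac, div_self (qfac_ne_zero n)]
  exact qfac_ne_zero n

lemma qbinom_self (n : ℕ) : qbinom n n = 1 := by
  simp only [qbinom, if_pos (le_refl n), Nat.sub_self]
  show qfac n / (qfac n * qfac 0) = 1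
  simp [qfac, div_self (qfac_ne_zero n)]
  exact qfac_ne_zero n

lemma qbinom_of_gt {n k : ℕ} (h : n < k) : qbinom n k = 0 := by
  simp [qbinom, Nat.not_le.2 h]

lemma pascal (N k : ℕ) :
    qbinom (N+1) (k+1) = qbinom N (k+1) + (RatFunc.X : RatFunc ℚ) ^ (N-k) * qbinom N k := by
  rcases lt_or_ge N k with h | h
  · rw [qbinom_of_gt (by omega), qbinom_of_gt (by omega), qbinom_of_gt h]
    ring
  rcases eq_or_lt_of_le h with rfl | hlt
  · rw [qbinom_self, qbinom_self, qbinom_of_gt (by omega), Nat.sub_self]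
    ring
  have h1 : k + 1 ≤ N := hlt
  rw [qbinom, qbinom, qbinom, if_pos (by omega), if_pos (by omega), if_pos (by omega)]
  have e1 : N + 1 - (k+1) = N - k := by omega
  have e2 : N - k = (N - k - 1) + 1 := by omega
  have e3 : N - (k+1) = N - k - 1 := by omega
  rw [e1, e3, e2, qfac_succ N, qfac_succ (N-k-1), qfac_succ k]
  have ha := qfac_ne_zero N
  have hb := qfac_ne_zero k
  have hc := qfac_ne_zero (N-k-1)
  have hu := one_sub_Xpow_ne_zero k
  have hv := one_sub_Xpow_ne_zero (N-k-1)
  have hx : (RatFunc.X : RatFunc ℚ) ^ (N - k - 1 + 1) * RatFunc.X ^ (k+1) = RatFunc.X ^ (N+1) := by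
    rw [← pow_add]; congr 1; omega
  rw [← hx]
  set A := (RatFunc.X : RatFunc ℚ) ^ (N - k - 1 + 1) with hA
  set B := (RatFunc.X : RatFunc ℚ) ^ (k + 1) with hB
  field_simp
  rw [Nat.add_sub_cancel, mul_div_right_comm, div_self hc]; ring
lemma vandermonde (i n k : ℕ) :
    qbinom (i+n) k = ∑ m ∈ Finset.range (k+1),
      (RatFunc.X : RatFunc ℚ) ^ (((i:ℤ)-m)*((k:ℤ)-m)) * qbinom i m * qbinom n (k-m) := by
  induction n generalizing k with
  | zero =>
    rw [Finset.sum_eq_single k]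
    · rw [Nat.sub_self, qbinom_zero]
      have : ((k:ℤ) - k) = 0 := by ring
      rw [this, mul_zero, zpow_zero]
      ring
    · intro m hm hne
      have : 0 < k - m := by
        simp only [Finset.mem_range, Nat.lt_succ_iff] at hm
        omega
      rw [qbinom_of_gt this, mul_zero]
    · intro h; exact absurd (Finset.self_mem_range_succ k) h
  | succ n ih =>
    cases k with
    | zero =>
      simp [qbinom_zero]
    | succ k' =>
      have hsplit : ∀ m ∈ Finset.range (k'+1),
          (RatFunc.X : RatFunc ℚ) ^ (((i:ℤ)-m)*(((k'+1:ℕ):ℤ)-m)) * qbinom i m * qbinom (n+1) (k'+1-m)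
          = (RatFunc.X : RatFunc ℚ) ^ (((i:ℤ)-m)*(((k'+1:ℕ):ℤ)-m)) * qbinom i m * qbinom n (k'+1-m)
            + (RatFunc.X : RatFunc ℚ) ^ ((i:ℤ)+n-k') *
              ((RatFunc.X : RatFunc ℚ) ^ (((i:ℤ)-m)*((k':ℤ)-m)) * qbinom i m * qbinom n (k'-m)) := by
        intro m hm
        have hm' : m ≤ k' := by
          simp only [Finset.mem_range, Nat.lt_succ_iff] at hm; exact hm
        have e : k'+1-m = (k'-m)+1 := by omega
        rw [e, pascal n (k'-m), ← e]
        rcases le_or_gt (k'-m) n with hn | hn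
        · have hexp : (RatFunc.X : RatFunc ℚ) ^ (((i:ℤ)-m)*(((k'+1:ℕ):ℤ)-m)) *
              (RatFunc.X : RatFunc ℚ) ^ (n-(k'-m)) =
              (RatFunc.X : RatFunc ℚ) ^ ((i:ℤ)+n-k') *
              (RatFunc.X : RatFunc ℚ) ^ (((i:ℤ)-m)*((k':ℤ)-m)) := by
            rw [← zpow_natCast (RatFunc.X : RatFunc ℚ) (n-(k'-m)),
              ← zpow_add₀ RatFunc.X_ne_zero, ← zpow_add₀ RatFunc.X_ne_zero]
            congr 1
            rw [Nat.cast_sub hn, Nat.cast_sub hm']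
            push_cast
            ring
          calc (RatFunc.X : RatFunc ℚ) ^ (((i:ℤ)-m)*(((k'+1:ℕ):ℤ)-m)) * qbinom i m *
                (qbinom n (k'+1-m) + (RatFunc.X : RatFunc ℚ) ^ (n-(k'-m)) * qbinom n (k'-m))
              = (RatFunc.X : RatFunc ℚ) ^ (((i:ℤ)-m)*(((k'+1:ℕ):ℤ)-m)) * qbinom i m * qbinom n (k'+1-m)
                + ((RatFunc.X : RatFunc ℚ) ^ (((i:ℤ)-m)*(((k'+1:ℕ):ℤ)-m)) *
                  (RatFunc.X : RatFunc ℚ) ^ (n-(k'-m))) * (qbinom i m * qbinom n (k'-m)) := by ring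
            _ = _ := by rw [hexp]; ring
        · rw [qbinom_of_gt hn]
          ring
      rw [Finset.sum_range_succ, Finset.sum_congr rfl hsplit, Finset.sum_add_distrib,
        ← Finset.mul_sum, ← ih k', Nat.sub_self, qbinom_zero, mul_one]
      have hlast : (RatFunc.X : RatFunc ℚ) ^ (((i:ℤ)-(k'+1:ℕ))*(((k'+1:ℕ):ℤ)-(k'+1:ℕ))) *
          qbinom i (k'+1) = (RatFunc.X : RatFunc ℚ) ^ (((i:ℤ)-(k'+1:ℕ))*(((k'+1:ℕ):ℤ)-(k'+1:ℕ))) *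
          qbinom i (k'+1) * qbinom n (k'+1-(k'+1)) := by
        rw [Nat.sub_self, qbinom_zero, mul_one]
      rw [hlast, add_right_comm, ← Finset.sum_range_succ
        (fun m => (RatFunc.X : RatFunc ℚ) ^ (((i:ℤ)-m)*(((k'+1:ℕ):ℤ)-m)) * qbinom i m * qbinom n (k'+1-m)),
        ← ih (k'+1)]
      have e2 : i + (n+1) = (i+n) + 1 := by omega
      rw [e2, pascal (i+n) k']
      congr 1
      rcases le_or_gt k' (i+n) with hk | hk
      · congr 1
        rw [← zpow_natCast (RatFunc.X : RatFunc ℚ) (i+n-k')]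
        congr 1
        omega
      · rw [qbinom_of_gt hk, mul_zero, mul_zero]
lemma trinom (n i t : ℕ) :
    qbinom n i * qbinom (n-i) t = qbinom n (i+t) * qbinom (i+t) i := by
  rcases le_or_gt (i+t) n with h | h
  · rw [qbinom, qbinom, qbinom, qbinom, if_pos (by omega), if_pos (by omega),
      if_pos (by omega), if_pos (by omega)]
    have e1 : n - i - t = n - (i+t) := by omega
    have e2 : i + t - i = t := by omega
    rw [e1, e2]
    have h1 := qfac_ne_zero i
    have h2 := qfac_ne_zero t
    have h3 := qfac_ne_zero (i+t)
    have h4 := qfac_ne_zero (n-(i+t))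
    have h5 := qfac_ne_zero (n-i)
    have h6 := qfac_ne_zero n
    field_simp
  · rcases le_or_gt i n with h2 | h2
    · rw [qbinom_of_gt (show n - i < t by omega), qbinom_of_gt h, mul_zero, zero_mul]
    · rw [qbinom_of_gt h2, qbinom_of_gt (show n < i + t by omega), zero_mul, zero_mul]

lemma qmulti_eq (i k m : ℕ) (hm : m ≤ k) :
    qmulti (i+k-m) i k = qbinom (i+k-m) i * qbinom i m := by
  rcases le_or_gt m i with hmi | hmi
  · rw [qmulti, if_pos (by omega), qbinom, qbinom, if_pos (by omega), if_pos hmi]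
    have e1 : i + k - m - i = k - m := by omega
    have e2 : i + k - m - k = i - m := by omega
    have e3 : i + k - (i + k - m) = m := by omega
    rw [e1, e2, e3]
    have h1 := qfac_ne_zero i
    have h2 := qfac_ne_zero m
    have h3 := qfac_ne_zero (k-m)
    have h4 := qfac_ne_zero (i-m)
    have h5 := qfac_ne_zero (i+k-m)
    field_simp
  · rw [qmulti, if_neg (by omega), qbinom_of_gt hmi, mul_zero]


/-- Result 3.2. -/
theorem stmt_12 (n i k : ℕ) :
    qbinom n i * qbinom n k =
      ∑ j ∈ Finset.range (i + k + 1),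
        (RatFunc.X : RatFunc ℚ) ^ (((j : ℤ) - i) * ((j : ℤ) - k)) *
          qmulti j i k * qbinom n j := by
  rcases le_or_gt i n with hin | hin
  · -- main case
    have hv := vandermonde i (n-i) k
    rw [Nat.add_sub_cancel' hin] at hv
    rw [hv, Finset.mul_sum]
    rw [← Finset.sum_subset (show Finset.Ico i (i+k+1) ⊆ Finset.range (i+k+1) by
        intro j hj; simp only [Finset.mem_Ico] at hj; simp only [Finset.mem_range]; omega)
      (by
        intro j hj hj'
        simp only [Finset.mem_range] at hj
        simp only [Finset.mem_Ico] at hj'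
        have : j < i := by omega
        rw [qmulti, if_neg (by omega), mul_zero, zero_mul])]
    refine Finset.sum_bij' (fun m _ => i + k - m) (fun j _ => i + k - j) ?_ ?_ ?_ ?_ ?_
    · intro m hm
      simp only [Finset.mem_range, Nat.lt_succ_iff] at hm
      simp only [Finset.mem_Ico]
      omega
    · intro j hj
      simp only [Finset.mem_Ico] at hj
      simp only [Finset.mem_range, Nat.lt_succ_iff]
      omega
    · intro m hm
      simp only [Finset.mem_range, Nat.lt_succ_iff] at hm
      omega
    · intro j hj
      simp only [Finset.mem_Ico] at hj
      omega
    · intro m hm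
      simp only [Finset.mem_range, Nat.lt_succ_iff] at hm
      rw [qmulti_eq i k m hm]
      have ecast : ((i + k - m : ℕ) : ℤ) = (i : ℤ) + k - m := by omega
      have eexp : (((i+k-m : ℕ) : ℤ) - i) * (((i+k-m : ℕ) : ℤ) - k)
          = ((i:ℤ) - m) * ((k:ℤ) - m) := by rw [ecast]; ring
      rw [eexp]
      have etr : i + (k - m) = i + k - m := by omega
      have := trinom n i (k-m)
      rw [etr] at this
      rw [← mul_assoc, mul_comm (qbinom n i), mul_assoc, this]
      ring
  · rw [qbinom_of_gt hin, zero_mul]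
    symm
    apply Finset.sum_eq_zero
    intro j hj
    rcases le_or_gt i j with hij | hij
    · rw [qbinom_of_gt (show n < j by omega), mul_zero]
    · rw [qmulti, if_neg (by omega), mul_zero, zero_mul]
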